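/- Let h(t) = √(2/π) ∫₀^{√t} (t − x²) e^{−x²/2} dx − (2/3)t for t ≥ 0. Then h'(t) = √(2/π) ∫₀^{√t} e^{−x²/2} dx − 2/3, h' is increasing, h'(49/20) > 0.2, and h(t) > 0 for all t ≥ 49/20. -/

import Mathlib

open Real intervalIntegral

noncomputable def Ee : ℝ → ℝ := fun x => Real.exp (-x^2/2)
lemma contE : Continuous Ee := by unfold Ee; continuity
lemma intE (a b : ℝ) : IntervalIntegrable Ee MeasureTheory.volume a b := contE.intervalIntegrable a b

lemma hEderiv (x : ℝ) : HasDerivAt Ee (-x * Ee x) x := by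
  have h1 : HasDerivAt (fun x : ℝ => -x^2/2) (-x) x := by
    have := ((hasDerivAt_pow 2 x).neg.div_const 2)
    simpa [mul_comm] using this.congr_deriv (by ring)
  unfold Ee; simpa [mul_comm] using h1.exp

lemma hFderiv (s : ℝ) : HasDerivAt (fun u => ∫ x in (0:ℝ)..u, Ee x) (Ee s) s :=
  intervalIntegral.integral_hasDerivAt_right (intE 0 s)
    (contE.stronglyMeasurableAtFilter _ _) contE.continuousAt

lemma closed_form (t s : ℝ) :
    ∫ x in (0:ℝ)..s, (t - x^2) * Ee x
      = (t - 1) * (∫ x in (0:ℝ)..s, Ee x) + s * Ee s := by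
  have hderiv : ∀ x ∈ Set.uIcc (0:ℝ) s,
      HasDerivAt (fun u => (t - 1) * (∫ y in (0:ℝ)..u, Ee y) + u * Ee u)
        ((t - x^2) * Ee x) x := by
    intro x _
    have h1 := ((hFderiv x).const_mul (t-1)).add ((hasDerivAt_id x).mul (hEderiv x))
    refine h1.congr_deriv ?_
    simp only [id_eq]; ring
  have hint : IntervalIntegrable (fun x => (t - x^2) * Ee x) MeasureTheory.volume 0 s :=
    (Continuous.mul (by continuity) contE).intervalIntegrable _ _
  have := intervalIntegral.integral_eq_sub_of_hasDerivAt hderiv hint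
  simpa [intervalIntegral.integral_same] using this


lemma exp_neg_le (u : ℝ) (hu : 0 ≤ u) : Real.exp (-u) ≤ 1 - u + u^2/2 := by
  have key : MonotoneOn (fun u : ℝ => 1 - u + u^2/2 - Real.exp (-u)) (Set.Ici 0) := by
    apply monotoneOn_of_deriv_nonneg (convex_Ici 0)
    · exact Continuous.continuousOn (by continuity)
    · refine Differentiable.differentiableOn ?_
      fun_prop
    · intro x hx
      rw [interior_Ici] at hx
      have h1 : HasDerivAt (fun u : ℝ => Real.exp (-u)) (-Real.exp (-x)) x := by
        simpa using ((hasDerivAt_id x).neg.exp)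
      have h2 : HasDerivAt (fun u : ℝ => 1 - u + u^2/2) (-1 + x) x := by
        have := ((hasDerivAt_const x (1:ℝ)).sub (hasDerivAt_id x)).add
          ((hasDerivAt_pow 2 x).div_const 2)
        refine this.congr_deriv ?_
        norm_num
      have hd : HasDerivAt (fun u : ℝ => 1 - u + u^2/2 - Real.exp (-u)) _ x := h2.sub h1
      rw [hd.deriv]
      have := Real.add_one_le_exp (-x)
      nlinarith
  have := key (Set.self_mem_Ici) hu hu
  norm_num at this
  nlinarith [this]

lemma le_exp_neg (u : ℝ) (hu : 0 ≤ u) : 1 - u + u^2/2 - u^3/6 ≤ Real.exp (-u) := by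
  have key : MonotoneOn (fun u : ℝ => Real.exp (-u) - (1 - u + u^2/2 - u^3/6)) (Set.Ici 0) := by
    apply monotoneOn_of_deriv_nonneg (convex_Ici 0)
    · exact Continuous.continuousOn (by continuity)
    · refine Differentiable.differentiableOn ?_
      fun_prop
    · intro x hx
      rw [interior_Ici] at hx
      have h1 : HasDerivAt (fun u : ℝ => Real.exp (-u)) (-Real.exp (-x)) x := by
        simpa using ((hasDerivAt_id x).neg.exp)
      have h2 : HasDerivAt (fun u : ℝ => 1 - u + u^2/2 - u^3/6) (-1 + x - x^2/2) x := by
        have := (((hasDerivAt_const x (1:ℝ)).sub (hasDerivAt_id x)).add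
          ((hasDerivAt_pow 2 x).div_const 2)).sub ((hasDerivAt_pow 3 x).div_const 6)
        refine this.congr_deriv ?_
        norm_num
        ring
      have hd : HasDerivAt (fun u : ℝ => Real.exp (-u) - (1 - u + u^2/2 - u^3/6)) _ x := h1.sub h2
      rw [hd.deriv]
      have := exp_neg_le x hx.le
      nlinarith
  have := key (Set.self_mem_Ici) hu hu
  norm_num at this
  nlinarith [this]

lemma polyint1 (s : ℝ) :
    ∫ x in (0:ℝ)..s, (1 - x^2/2 + x^4/8 - x^6/48) = s - s^3/6 + s^5/40 - s^7/336 := by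
  have hderiv : ∀ x ∈ Set.uIcc (0:ℝ) s,
      HasDerivAt (fun u : ℝ => u - u^3/6 + u^5/40 - u^7/336)
        (1 - x^2/2 + x^4/8 - x^6/48) x := by
    intro x _
    have := (((hasDerivAt_id x).sub ((hasDerivAt_pow 3 x).div_const 6)).add
      ((hasDerivAt_pow 5 x).div_const 40)).sub ((hasDerivAt_pow 7 x).div_const 336)
    refine this.congr_deriv ?_
    norm_num
    ring
  have hint : IntervalIntegrable (fun x : ℝ => 1 - x^2/2 + x^4/8 - x^6/48)
      MeasureTheory.volume 0 s := (Continuous.intervalIntegrable (by continuity) _ _)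
  have := intervalIntegral.integral_eq_sub_of_hasDerivAt hderiv hint
  simpa using this

lemma polyint2 (s : ℝ) :
    ∫ x in (0:ℝ)..s, ((49/20 - x^2) * (1 - x^2/2 + x^4/8 - x^6/48))
      = (49/20)*s - (1+49/40)*s^3/3 + (1/2+49/160)*s^5/5 - (1/8+49/960)*s^7/7 + s^9/432 := by
  have hderiv : ∀ x ∈ Set.uIcc (0:ℝ) s,
      HasDerivAt (fun u : ℝ => (49/20)*u - (1+49/40)*u^3/3 + (1/2+49/160)*u^5/5
          - (1/8+49/960)*u^7/7 + u^9/432)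
        ((49/20 - x^2) * (1 - x^2/2 + x^4/8 - x^6/48)) x := by
    intro x _
    have := (((((hasDerivAt_id x).const_mul (49/20:ℝ)).sub
      (((hasDerivAt_pow 3 x).const_mul (1+49/40:ℝ)).div_const 3)).add
      (((hasDerivAt_pow 5 x).const_mul (1/2+49/160:ℝ)).div_const 5)).sub
      (((hasDerivAt_pow 7 x).const_mul (1/8+49/960:ℝ)).div_const 7)).add
      ((hasDerivAt_pow 9 x).div_const 432)
    refine this.congr_deriv ?_
    norm_num
    ring
  have hint : IntervalIntegrable (fun x : ℝ => (49/20 - x^2) * (1 - x^2/2 + x^4/8 - x^6/48))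
      MeasureTheory.volume 0 s := (Continuous.intervalIntegrable (by continuity) _ _)
  have := intervalIntegral.integral_eq_sub_of_hasDerivAt hderiv hint
  simpa using this

lemma pointwise_le (x : ℝ) : 1 - x^2/2 + x^4/8 - x^6/48 ≤ Ee x := by
  have h := le_exp_neg (x^2/2) (by positivity)
  have heq : Ee x = Real.exp (-(x^2/2)) := by unfold Ee; ring_nf
  rw [heq]
  nlinarith [h]

lemma cs0_lb : (1.2488 : ℝ) ≤ Real.sqrt (2/Real.pi) * Real.sqrt (49/20) := by
  rw [← Real.sqrt_mul (by positivity)]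
  rw [show (1.2488:ℝ) = Real.sqrt (1.2488^2) by rw [Real.sqrt_sq]; norm_num]
  apply Real.sqrt_le_sqrt
  rw [div_mul_eq_mul_div, le_div_iff₀ Real.pi_pos]
  nlinarith [Real.pi_lt_d6]
theorem stmt_14 (h h' : ℝ → ℝ)
    (hh : ∀ t : ℝ, h t =
      Real.sqrt (2 / Real.pi) * (∫ x in (0 : ℝ)..Real.sqrt t, (t - x ^ 2) * Real.exp (-x ^ 2 / 2))
        - (2 / 3) * t)
    (hh' : ∀ t : ℝ, h' t =
      Real.sqrt (2 / Real.pi) * (∫ x in (0 : ℝ)..Real.sqrt t, Real.exp (-x ^ 2 / 2)) - 2 / 3) :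
    (∀ t ∈ Set.Ioi (0 : ℝ), HasDerivAt h (h' t) t)
    ∧ StrictMonoOn h' (Set.Ici 0)
    ∧ 0.2 < h' (49 / 20)
    ∧ ∀ t : ℝ, 49 / 20 ≤ t → 0 < h t := by
  have hEee : (fun x : ℝ => Real.exp (-x ^ 2 / 2)) = Ee := rfl
  -- closed form for h
  have hclosed : h = fun t => Real.sqrt (2 / Real.pi) *
      ((t - 1) * (∫ x in (0 : ℝ)..Real.sqrt t, Ee x) + Real.sqrt t * Ee (Real.sqrt t))
        - (2 / 3) * t := by
    funext t
    rw [hh t, ← closed_form t (Real.sqrt t)]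
    rfl
  -- Part 1 : derivative
  have hderiv : ∀ t ∈ Set.Ioi (0 : ℝ), HasDerivAt h (h' t) t := by
    intro t ht
    have ht0 : (0:ℝ) < t := ht
    have hspos : 0 < Real.sqrt t := Real.sqrt_pos.mpr ht0
    have hsne : Real.sqrt t ≠ 0 := ne_of_gt hspos
    have hss : Real.sqrt t * Real.sqrt t = t := Real.mul_self_sqrt ht0.le
    have hsq : HasDerivAt Real.sqrt (1 / (2 * Real.sqrt t)) t :=
      Real.hasDerivAt_sqrt (ne_of_gt ht0)
    have hF : HasDerivAt (fun u => ∫ x in (0:ℝ)..Real.sqrt u, Ee x)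
        (Ee (Real.sqrt t) * (1 / (2 * Real.sqrt t))) t := by
      simpa [Function.comp_def] using (hFderiv (Real.sqrt t)).comp t hsq
    have hEs : HasDerivAt (fun u => Ee (Real.sqrt u))
        ((-Real.sqrt t * Ee (Real.sqrt t)) * (1 / (2 * Real.sqrt t))) t := by
      simpa [Function.comp_def] using (hEderiv (Real.sqrt t)).comp t hsq
    have hbig :
        HasDerivAt (fun u => Real.sqrt (2 / Real.pi) *
          ((u - 1) * (∫ x in (0 : ℝ)..Real.sqrt u, Ee x) + Real.sqrt u * Ee (Real.sqrt u))
            - (2 / 3) * u)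
          (Real.sqrt (2 / Real.pi) *
            ((1 * (∫ x in (0:ℝ)..Real.sqrt t, Ee x)
              + (t - 1) * (Ee (Real.sqrt t) * (1 / (2 * Real.sqrt t))))
            + ((1 / (2 * Real.sqrt t)) * Ee (Real.sqrt t)
              + Real.sqrt t * ((-Real.sqrt t * Ee (Real.sqrt t)) * (1 / (2 * Real.sqrt t)))))
            - (2 / 3) * 1) t :=
      (((((hasDerivAt_id' (x := t)).sub_const 1).mul hF).add (hsq.mul hEs)).const_mul _).sub
        ((hasDerivAt_id' (x := t)).const_mul (2/3))
    rw [hclosed, hh' t]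
    refine hbig.congr_deriv ?_
    simp only [hEee]
    have e : (1 * (∫ x in (0:ℝ)..Real.sqrt t, Ee x)
        + (t - 1) * (Ee (Real.sqrt t) * (1 / (2 * Real.sqrt t))))
        + ((1 / (2 * Real.sqrt t)) * Ee (Real.sqrt t)
        + Real.sqrt t * ((-Real.sqrt t * Ee (Real.sqrt t)) * (1 / (2 * Real.sqrt t))))
        = ∫ x in (0:ℝ)..Real.sqrt t, Ee x := by
      have h2s : (2 * Real.sqrt t) ≠ 0 := by positivity
      have hsq2 : Real.sqrt t ^ 2 = t := Real.sq_sqrt ht0.le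
      field_simp
      linear_combination (-Ee (Real.sqrt t)) * hsq2
    rw [e]
    ring
  have hmono' : StrictMonoOn h' (Set.Ici 0) := by
    intro a ha b hb hab
    rw [hh' a, hh' b, hEee]
    have hsab : Real.sqrt a < Real.sqrt b := Real.sqrt_lt_sqrt ha hab
    have hadd := intervalIntegral.integral_add_adjacent_intervals
      (intE 0 (Real.sqrt a)) (intE (Real.sqrt a) (Real.sqrt b))
    have hpos : 0 < ∫ x in Real.sqrt a..Real.sqrt b, Ee x :=
      intervalIntegral.intervalIntegral_pos_of_pos_on (intE _ _)
        (fun x _ => Real.exp_pos _) hsab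
    have hc : 0 < Real.sqrt (2 / Real.pi) := Real.sqrt_pos.mpr (by positivity)
    nlinarith [hadd, hpos, hc]
  have hnum3 : (0.2:ℝ) < h' (49/20) := by
    rw [hh', hEee]
    set s₀ := Real.sqrt ((49:ℝ)/20) with hs₀def
    have hs₀sq : s₀ ^ 2 = 49/20 := Real.sq_sqrt (by norm_num)
    have hs₀pos : 0 < s₀ := Real.sqrt_pos.mpr (by norm_num)
    have hlb : s₀ - s₀^3/6 + s₀^5/40 - s₀^7/336 ≤ ∫ x in (0:ℝ)..s₀, Ee x := by
      rw [← polyint1]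
      exact intervalIntegral.integral_mono_on hs₀pos.le
        (Continuous.intervalIntegrable (by fun_prop) _ _) (intE _ _)
        (fun x _ => pointwise_le x)
    have hq : s₀ - s₀^3/6 + s₀^5/40 - s₀^7/336 = s₀ * (89339/128000) := by
      linear_combination (-s₀/6 + (s₀^3 + 49/20*s₀)/40 - (s₀^5 + 49/20*s₀^3 + (49/20)^2*s₀)/336) * hs₀sq
    rw [hq] at hlb
    have h2 : Real.sqrt (2/Real.pi) * (s₀ * (89339/128000)) ≤
        Real.sqrt (2/Real.pi) * (∫ x in (0:ℝ)..s₀, Ee x) :=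
      mul_le_mul_of_nonneg_left hlb (Real.sqrt_nonneg _)
    have h3 : (1.2488:ℝ) * (89339/128000) ≤ Real.sqrt (2/Real.pi) * s₀ * (89339/128000) := by
      have := cs0_lb
      rw [← hs₀def] at this
      nlinarith [this]
    nlinarith [h2, h3]
  refine ⟨hderiv, hmono', hnum3, ?_⟩
  have hnum : 0 < h (49/20 : ℝ) := by
    rw [hh]
    set s₀ := Real.sqrt ((49:ℝ)/20) with hs₀def
    have hs₀sq : s₀ ^ 2 = 49/20 := Real.sq_sqrt (by norm_num)
    have hs₀pos : 0 < s₀ := Real.sqrt_pos.mpr (by norm_num)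
    have hlb : (49/20)*s₀ - (1+49/40)*s₀^3/3 + (1/2+49/160)*s₀^5/5 - (1/8+49/960)*s₀^7/7 + s₀^9/432
        ≤ ∫ x in (0:ℝ)..s₀, ((49:ℝ)/20 - x ^ 2) * Real.exp (-x ^ 2 / 2) := by
      rw [← polyint2]
      refine intervalIntegral.integral_mono_on hs₀pos.le
        (Continuous.intervalIntegrable (by fun_prop) _ _)
        (Continuous.intervalIntegrable (by fun_prop) _ _) ?_
      intro x hx
      have hx2 : x^2 ≤ 49/20 := by
        have := hx.1; have := hx.2
        nlinarith [hs₀sq]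
      have := mul_le_mul_of_nonneg_left (pointwise_le x) (by linarith : (0:ℝ) ≤ 49/20 - x^2)
      simpa [Ee] using this
    have hq : (49/20)*s₀ - (1+49/40)*s₀^3/3 + (1/2+49/160)*s₀^5/5 - (1/8+49/960)*s₀^7/7 + s₀^9/432
        = s₀ * (45425009/34560000) := by
      linear_combination (-(1+49/40)*s₀/3 + (1/2+49/160)*(s₀^3 + 49/20*s₀)/5
        - (1/8+49/960)*(s₀^5 + 49/20*s₀^3 + (49/20)^2*s₀)/7
        + (s₀^7 + 49/20*s₀^5 + (49/20)^2*s₀^3 + (49/20)^3*s₀)/432) * hs₀sq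
    rw [hq] at hlb
    have h2 : Real.sqrt (2/Real.pi) * (s₀ * (45425009/34560000)) ≤
        Real.sqrt (2/Real.pi) * (∫ x in (0:ℝ)..s₀, ((49:ℝ)/20 - x ^ 2) * Real.exp (-x ^ 2 / 2)) :=
      mul_le_mul_of_nonneg_left hlb (Real.sqrt_nonneg _)
    have h3 : (1.2488:ℝ) * (45425009/34560000) ≤ Real.sqrt (2/Real.pi) * s₀ * (45425009/34560000) := by
      have := cs0_lb
      rw [← hs₀def] at this
      nlinarith [this]
    nlinarith [h2, h3]
  have hmono : StrictMonoOn h (Set.Ici ((49:ℝ)/20)) := by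
    apply strictMonoOn_of_deriv_pos (convex_Ici _)
    · intro t ht
      exact (hderiv t (lt_of_lt_of_le (by norm_num : (0:ℝ) < 49/20) ht)).continuousAt.continuousWithinAt
    · intro t ht
      rw [interior_Ici] at ht
      have htgt : (49:ℝ)/20 < t := ht
      have ht0 : (0:ℝ) < t := lt_trans (by norm_num) htgt
      rw [(hderiv t ht0).deriv]
      have h1 : h' (49/20) < h' t :=
        hmono' (by norm_num) (le_of_lt ht0) htgt
      have : (0.2:ℝ) < h' t := lt_trans hnum3 h1
      linarith
  intro t ht
  rcases ht.eq_or_lt with heq | hlt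
  · rw [← heq]; exact hnum
  · exact lt_trans hnum (hmono (Set.self_mem_Ici) ht hlt)
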